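/- A unitary operator U on ℂ^n ⊗ ℂ^k satisfies L_{U,β}(ρ) = L_{U,γ}(ρ) for all density matrices β, γ ∈ M_k^{1,+}(ℂ) and all density matrices ρ ∈ M_n^{1,+}(ℂ) if and only if there exist unitaries V on ℂ^n and W on ℂ^k such that U = V ⊗ W. In other words, U_single = {V ⊗ W : V ∈ U_n, W ∈ U_k}. -/

import Mathlib

open Matrix Kronecker ComplexOrder

noncomputable section

namespace BipartiteUnitary

/-- A square complex matrix is unitary. -/
def IsUnitary {m : Type*} [Fintype m] [DecidableEq m] (U : Matrix m m ℂ) : Prop :=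
  U * Uᴴ = 1 ∧ Uᴴ * U = 1

/-- A density matrix: positive semidefinite with unit trace. -/
def IsDensity {m : Type*} [Fintype m] (β : Matrix m m ℂ) : Prop :=
  β.PosSemidef ∧ β.trace = 1

/-- Partial trace over the second tensor factor. -/
def trB {n k : Type*} [Fintype k] (M : Matrix (n × k) (n × k) ℂ) : Matrix n n ℂ :=
  fun i j => ∑ s, M (i, s) (j, s)

/-- Partial trace over the first tensor factor. -/
def trA {n k : Type*} [Fintype n] (M : Matrix (n × k) (n × k) ℂ) : Matrix k k ℂ :=
  fun s t => ∑ i, M (i, s) (i, t)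

/-- The quantum channel `L_{U,β}(X) = Tr_B (U (X ⊗ β) U*)`. -/
def channel {n k : Type*} [Fintype n] [Fintype k]
    (U : Matrix (n × k) (n × k) ℂ) (β : Matrix k k ℂ) (X : Matrix n n ℂ) :
    Matrix n n ℂ :=
  trB (U * (X ⊗ₖ β) * Uᴴ)

/-- The partial transpose `X^Γ = (id ⊗ t)(X)` with respect to the second factor. -/
def pt {n k : Type*} (U : Matrix (n × k) (n × k) ℂ) : Matrix (n × k) (n × k) ℂ :=
  fun p q => U (p.1, q.2) (q.1, p.2)

/-- A family of vectors forming an orthonormal basis of `ℂ^k`. -/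
def ONB {k : Type*} [Fintype k] [DecidableEq k] (e : k → k → ℂ) : Prop :=
  ∀ i j, (∑ s, star (e i s) * e j s) = if i = j then (1 : ℂ) else 0

/-- A partial isometry. -/
def IsPartialIso {m : Type*} [Fintype m] [DecidableEq m] (R : Matrix m m ℂ) : Prop :=
  R * Rᴴ * R = R

/-- Membership in `𝒰^A_{block-diag}`: `U = ∑ i, U_i ⊗ e_i f_i*` with `U_i` unitary
and `{e_i}, {f_i}` orthonormal bases of `ℂ^k`. -/
def memUA {n k : ℕ} (U : Matrix (Fin n × Fin k) (Fin n × Fin k) ℂ) : Prop :=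
  ∃ (Us : Fin k → Matrix (Fin n) (Fin n) ℂ) (e f : Fin k → Fin k → ℂ),
    (∀ i, IsUnitary (Us i)) ∧ ONB e ∧ ONB f ∧
    U = ∑ i, Us i ⊗ₖ vecMulVec (e i) (star (f i))

/-- Membership in `ℳ^A_{block-diag}`: `X = ∑ i, X_i ⊗ e_i f_i*` with arbitrary `X_i`. -/
def memMA {n k : ℕ} (X : Matrix (Fin n × Fin k) (Fin n × Fin k) ℂ) : Prop :=
  ∃ (Xs : Fin k → Matrix (Fin n) (Fin n) ℂ) (e f : Fin k → Fin k → ℂ),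
    ONB e ∧ ONB f ∧ X = ∑ i, Xs i ⊗ₖ vecMulVec (e i) (star (f i))

/-- Membership in `𝒰^B_{block-diag}`. -/
def memUB {n k : ℕ} (U : Matrix (Fin n × Fin k) (Fin n × Fin k) ℂ) : Prop :=
  ∃ (Us : Fin n → Matrix (Fin k) (Fin k) ℂ) (e f : Fin n → Fin n → ℂ),
    (∀ i, IsUnitary (Us i)) ∧ ONB e ∧ ONB f ∧
    U = ∑ i, vecMulVec (e i) (star (f i)) ⊗ₖ Us i

/-- Membership in `ℳ^B_{block-diag}`. -/
def memMB {n k : ℕ} (X : Matrix (Fin n × Fin k) (Fin n × Fin k) ℂ) : Prop :=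
  ∃ (Xs : Fin n → Matrix (Fin k) (Fin k) ℂ) (e f : Fin n → Fin n → ℂ),
    ONB e ∧ ONB f ∧ X = ∑ i, vecMulVec (e i) (star (f i)) ⊗ₖ Xs i


section Helpers

variable {n k : ℕ}

lemma trB_kron {n k : Type*} [Fintype k] [Fintype n] (X : Matrix n n ℂ) (B : Matrix k k ℂ) :
    trB (X ⊗ₖ B) = B.trace • X := by
  ext i j
  simp only [trB, trace, Matrix.smul_apply, kroneckerMap_apply, diag_apply, smul_eq_mul]
  rw [← Finset.mul_sum, mul_comm]

lemma trB_add {n k : Type*} [Fintype k] (M N : Matrix (n × k) (n × k) ℂ) :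
    trB (M + N) = trB M + trB N := by
  ext i j; simp [trB, Finset.sum_add_distrib]

lemma trB_smul {n k : Type*} [Fintype k] (c : ℂ) (M : Matrix (n × k) (n × k) ℂ) :
    trB (c • M) = c • trB M := by
  ext i j; simp [trB, Finset.mul_sum]

lemma kron_conjT {n k : Type*} (A : Matrix n n ℂ) (B : Matrix k k ℂ) :
    (A ⊗ₖ B)ᴴ = Aᴴ ⊗ₖ Bᴴ := by
  ext p q; simp [conjTranspose_apply, kroneckerMap_apply]

/-- Easy direction. -/
lemma easy_dir {n k : Type*} [Fintype n] [Fintype k] [DecidableEq n] [DecidableEq k]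
    (V : Matrix n n ℂ) (W : Matrix k k ℂ) (hV : IsUnitary V) (hW : IsUnitary W)
    (β : Matrix k k ℂ) (hβ : β.trace = 1) (ρ : Matrix n n ℂ) :
    channel (V ⊗ₖ W) β ρ = V * ρ * Vᴴ := by
  have h1 : (V ⊗ₖ W) * (ρ ⊗ₖ β) * (V ⊗ₖ W)ᴴ = (V * ρ * Vᴴ) ⊗ₖ (W * β * Wᴴ) := by
    rw [kron_conjT, mul_kronecker_mul, mul_kronecker_mul]
  have h2 : (W * β * Wᴴ).trace = 1 := by
    rw [trace_mul_cycle, hW.2, one_mul, hβ]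
  rw [channel, h1, trB_kron, h2, one_smul]

lemma sum_two {m : Type*} [Fintype m] [DecidableEq m] {f : m → ℂ} {a b : m} (hab : a ≠ b)
    (h0 : ∀ x, x ≠ a → x ≠ b → f x = 0) : ∑ x, f x = f a + f b := by
  rw [← Finset.sum_pair hab]
  refine (Finset.sum_subset (Finset.subset_univ _) ?_).symm
  intro x _ hx
  simp only [Finset.mem_insert, Finset.mem_singleton] at hx
  push_neg at hx
  exact h0 x hx.1 hx.2

lemma isDensity_vecMulVec {m : Type*} [Fintype m] [DecidableEq m] (v : m → ℂ)
    (hv : star v ⬝ᵥ v = 1) : IsDensity (vecMulVec v (star v)) := by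
  constructor
  · have h : vecMulVec v (star v) = replicateCol Unit v * (replicateCol Unit v)ᴴ := by
      rw [conjTranspose_replicateCol, vecMulVec_eq Unit]
    rw [h]; exact posSemidef_self_mul_conjTranspose _
  · simpa [trace, vecMulVec_apply, diag, dotProduct, mul_comm] using hv

lemma isDensity_single {m : Type*} [Fintype m] [DecidableEq m] (a : m) :
    IsDensity (single a a (1:ℂ)) := by
  have hv : star (Pi.single a (1:ℂ)) ⬝ᵥ (Pi.single a (1:ℂ)) = 1 := by
    simp [dotProduct, Pi.single_apply, apply_ite (starRingEnd ℂ)]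
  have hd := isDensity_vecMulVec _ hv
  have he : vecMulVec (Pi.single a (1:ℂ)) (star (Pi.single a 1)) = single a a 1 := by
    ext x y
    simp only [vecMulVec_apply, Pi.star_apply, Pi.single_apply, RCLike.star_def,
      single, of_apply]
    by_cases hx : x = a
    · by_cases hy : y = a
      · simp [hx, hy]
      · simp [hx, hy, Ne.symm hy]
    · by_cases hy : y = a
      · simp [hx, hy, Ne.symm hx]
      · simp [hx, hy, Ne.symm hx, Ne.symm hy]
  rwa [he] at hd

set_option maxHeartbeats 2000000 in
lemma densities_span {m : Type*} [Fintype m] [DecidableEq m] (M : Matrix m m ℂ) :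
    M ∈ Submodule.span ℂ {β : Matrix m m ℂ | IsDensity β} := by
  have hdiag : ∀ a : m, (single a a (1:ℂ)) ∈
      Submodule.span ℂ {β : Matrix m m ℂ | IsDensity β} :=
    fun a => Submodule.subset_span (isDensity_single a)
  have hstd : ∀ a b : m, (single a b (1:ℂ)) ∈
      Submodule.span ℂ {β : Matrix m m ℂ | IsDensity β} := by
    intro a b
    by_cases hab : a = b
    · subst hab; exact hdiag a
    · set c : ℂ := Complex.ofReal ((Real.sqrt 2)⁻¹) with hcdef
      have hcc : c * c = 1/2 := by
        rw [hcdef, ← Complex.ofReal_mul]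
        norm_num [← mul_inv, Real.mul_self_sqrt]
      have hcstar : (starRingEnd ℂ) c = c := by rw [hcdef]; exact Complex.conj_ofReal _
      have hab' : b ≠ a := Ne.symm hab
      set v1 : m → ℂ := fun z => if z = a then c else if z = b then c else 0 with hv1
      set v2 : m → ℂ := fun z => if z = a then c else if z = b then Complex.I * c else 0 with hv2
      have hv1d : star v1 ⬝ᵥ v1 = 1 := by
        rw [show star v1 ⬝ᵥ v1 = ∑ x, (starRingEnd ℂ) (v1 x) * (v1 x) from rfl]
        rw [sum_two hab (by intro x hxa hxb; simp [hv1, hxa, hxb])]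
        simp [hv1, hab, hab', hcstar]
        linear_combination 2 * hcc
      have hv2d : star v2 ⬝ᵥ v2 = 1 := by
        rw [show star v2 ⬝ᵥ v2 = ∑ x, (starRingEnd ℂ) (v2 x) * (v2 x) from rfl]
        rw [sum_two hab (by intro x hxa hxb; simp [hv2, hxa, hxb])]
        simp [hv2, hab, hab', hcstar, _root_.map_mul, Complex.conj_I]
        linear_combination (1 - Complex.I * Complex.I) * hcc - Complex.I_mul_I / 2
      have key : single a b (1:ℂ) = vecMulVec v1 (star v1)
          + Complex.I • vecMulVec v2 (star v2)
          - ((1+Complex.I)/2) • (single a a 1 + single b b 1) := by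
        ext x y
        simp only [vecMulVec_apply, Matrix.add_apply, Matrix.sub_apply, Matrix.smul_apply,
          smul_eq_mul, Pi.star_apply, RCLike.star_def, hv1, hv2, single, of_apply]
        simp only [@eq_comm m a, @eq_comm m b, ite_and, apply_ite (starRingEnd ℂ), map_zero,
          _root_.map_mul, Complex.conj_I, hcstar]
        split_ifs <;>
          first
            | (exact absurd ((‹x = a› : x = a).symm.trans ‹x = b›) hab)
            | (exact absurd ((‹y = a› : y = a).symm.trans ‹y = b›) hab)
            | ring1
            | linear_combination -(1+Complex.I) * hcc
            | linear_combination (1+Complex.I) * hcc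
            | linear_combination 2 * hcc
            | linear_combination (-2) * hcc + (c*c) * Complex.I_mul_I
            | linear_combination 2 * hcc - (c*c) * Complex.I_mul_I
            | linear_combination (-(c*c)) * Complex.I_mul_I
            | linear_combination (c*c) * Complex.I_mul_I
            | linear_combination -(1+Complex.I) * hcc + Complex.I * (c*c) * Complex.I_mul_I
            | linear_combination (1+Complex.I) * hcc - Complex.I * (c*c) * Complex.I_mul_I
      rw [key]
      refine sub_mem (add_mem (Submodule.subset_span (isDensity_vecMulVec _ hv1d))
        (Submodule.smul_mem _ _ (Submodule.subset_span (isDensity_vecMulVec _ hv2d))))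
        (Submodule.smul_mem _ _ (add_mem (hdiag a) (hdiag b)))
  rw [matrix_eq_sum_single M]
  refine Submodule.sum_mem _ fun i _ => Submodule.sum_mem _ fun j _ => ?_
  rw [show single i j (M i j) = (M i j) • single i j 1 by
    rw [smul_single]; norm_num]
  exact Submodule.smul_mem _ _ (hstd i j)

lemma densities_span_top {m : Type*} [Fintype m] [DecidableEq m] :
    Submodule.span ℂ {β : Matrix m m ℂ | IsDensity β} = ⊤ :=
  Submodule.eq_top_iff'.mpr densities_span

/-- The channel as a linear map in the system state. -/
def channelXL {n k : ℕ} (U : Matrix (Fin n × Fin k) (Fin n × Fin k) ℂ)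
    (β : Matrix (Fin k) (Fin k) ℂ) :
    Matrix (Fin n) (Fin n) ℂ →ₗ[ℂ] Matrix (Fin n) (Fin n) ℂ where
  toFun X := channel U β X
  map_add' X Y := by
    simp only [channel]
    rw [Matrix.add_kronecker, Matrix.mul_add, Matrix.add_mul, trB_add]
  map_smul' c X := by
    simp only [channel, RingHom.id_apply]
    rw [Matrix.smul_kronecker, Matrix.mul_smul, Matrix.smul_mul, trB_smul]

/-- The channel as a linear map in the ancilla state. -/
def channelBL {n k : ℕ} (U : Matrix (Fin n × Fin k) (Fin n × Fin k) ℂ)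
    (X : Matrix (Fin n) (Fin n) ℂ) :
    Matrix (Fin k) (Fin k) ℂ →ₗ[ℂ] Matrix (Fin n) (Fin n) ℂ where
  toFun B := channel U B X
  map_add' B C := by
    simp only [channel]
    rw [Matrix.kronecker_add, Matrix.mul_add, Matrix.add_mul, trB_add]
  map_smul' c B := by
    simp only [channel, RingHom.id_apply]
    rw [Matrix.kronecker_smul, Matrix.mul_smul, Matrix.smul_mul, trB_smul]

/-- The trace as a linear functional times a fixed matrix. -/
def traceSmulL {n k : ℕ} (Y : Matrix (Fin n) (Fin n) ℂ) :
    Matrix (Fin k) (Fin k) ℂ →ₗ[ℂ] Matrix (Fin n) (Fin n) ℂ where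
  toFun B := B.trace • Y
  map_add' B C := by rw [trace_add, add_smul]
  map_smul' c B := by rw [trace_smul, smul_eq_mul, RingHom.id_apply, mul_smul]

lemma master {n k : ℕ} (hk : 0 < k) (U : Matrix (Fin n × Fin k) (Fin n × Fin k) ℂ)
    (h : ∀ β γ : Matrix (Fin k) (Fin k) ℂ, IsDensity β → IsDensity γ →
      ∀ ρ : Matrix (Fin n) (Fin n) ℂ, IsDensity ρ → channel U β ρ = channel U γ ρ)
    (B : Matrix (Fin k) (Fin k) ℂ) (X : Matrix (Fin n) (Fin n) ℂ) :
    channel U B X = B.trace •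
      channel U (single (⟨0, hk⟩ : Fin k) ⟨0, hk⟩ 1) X := by
  set β₀ : Matrix (Fin k) (Fin k) ℂ := single (⟨0, hk⟩ : Fin k) ⟨0, hk⟩ 1 with hβ₀
  have hβ₀d : IsDensity β₀ := isDensity_single _
  have step1 : ∀ β : Matrix (Fin k) (Fin k) ℂ, IsDensity β →
      ∀ X, channel U β X = channel U β₀ X := by
    intro β hβ
    have heq : channelXL U β = channelXL U β₀ := by
      apply LinearMap.ext_on densities_span_top
      intro ρ hρ
      exact h β β₀ hβ hβ₀d ρ hρ
    intro X
    exact congrArg (fun (f : Matrix (Fin n) (Fin n) ℂ →ₗ[ℂ] Matrix (Fin n) (Fin n) ℂ) => f X) heq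
  have step2 : channelBL U X = traceSmulL (channel U β₀ X) := by
    apply LinearMap.ext_on densities_span_top
    intro β hβ
    show channel U β X = β.trace • channel U β₀ X
    rw [step1 β hβ X, hβ.2, one_smul]
  exact congrArg (fun (f : Matrix (Fin k) (Fin k) ℂ →ₗ[ℂ] Matrix (Fin n) (Fin n) ℂ) => f B) step2

lemma trace_std {m : Type*} [Fintype m] [DecidableEq m] (b d : m) :
    (single b d (1:ℂ)).trace = if b = d then 1 else 0 := by
  simp [trace, diag, single, ite_and, Finset.sum_ite_eq, eq_comm]

lemma entry_eq_trace {m : Type*} [Fintype m] [DecidableEq m] (U M : Matrix m m ℂ) (p q : m) :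
    (Uᴴ * M * U) p q = trace (M * U * single q p 1 * Uᴴ) := by
  simp only [trace, diag_apply, mul_apply, conjTranspose_apply, single, of_apply,
    mul_ite, ite_mul, mul_zero, zero_mul, mul_one, one_mul, ite_and, Finset.sum_ite_irrel,
    Finset.sum_ite_eq, Finset.sum_ite_eq', Finset.mem_univ, if_true, Finset.sum_const_zero]
  simp only [Finset.sum_mul]
  rw [Finset.sum_comm]
  refine Finset.sum_congr rfl fun r _ => Finset.sum_congr rfl fun t _ => ?_
  ring

lemma trace_kron_one_mul {n k : ℕ} (A : Matrix (Fin n) (Fin n) ℂ)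
    (M : Matrix (Fin n × Fin k) (Fin n × Fin k) ℂ) :
    trace ((A ⊗ₖ (1 : Matrix (Fin k) (Fin k) ℂ)) * M) = trace (A * trB M) := by
  simp only [trace, diag_apply, mul_apply, kroneckerMap_apply, one_apply, trB,
    Fintype.sum_prod_type, mul_ite, ite_mul, mul_zero, zero_mul, mul_one, one_mul,
    Finset.sum_ite_irrel, Finset.sum_ite_eq, Finset.sum_ite_eq', Finset.mem_univ, if_true,
    Finset.sum_const_zero, Finset.mul_sum]
  show (∑ i : Fin n, ∑ s : Fin k, ∑ j : Fin n, A i j * M (j,s) (i,s))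
      = ∑ i : Fin n, ∑ j : Fin n, ∑ s : Fin k, A i j * M (j,s) (i,s)
  exact Finset.sum_congr rfl fun i _ => Finset.sum_comm

lemma std_kron_std {n k : ℕ} (a c : Fin n) (b d : Fin k) :
    single ((a,b) : Fin n × Fin k) (c,d) (1:ℂ)
      = single a c 1 ⊗ₖ single b d 1 := by
  ext ⟨x,y⟩ ⟨z,w⟩
  simp only [single, of_apply, kroneckerMap_apply, Prod.mk.injEq, ite_and, mul_ite,
    ite_mul, mul_zero, zero_mul, mul_one, one_mul]
  by_cases h1 : a = x <;> by_cases h2 : b = y <;> by_cases h3 : c = z <;> by_cases h4 : d = w <;>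
    simp [h1, h2, h3, h4]

lemma kron_one_inj {n k : ℕ} (hk : 0 < k) {X Y : Matrix (Fin n) (Fin n) ℂ}
    (h : X ⊗ₖ (1 : Matrix (Fin k) (Fin k) ℂ) = Y ⊗ₖ 1) : X = Y := by
  ext a c
  have := congrFun (congrFun h (a, ⟨0, hk⟩)) (c, ⟨0, hk⟩)
  simpa [kroneckerMap_apply] using this

lemma K_eq {n k : ℕ} (hk : 0 < k) (U : Matrix (Fin n × Fin k) (Fin n × Fin k) ℂ)
    (hmaster : ∀ (B : Matrix (Fin k) (Fin k) ℂ) (X : Matrix (Fin n) (Fin n) ℂ),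
      channel U B X = B.trace • channel U (single (⟨0, hk⟩ : Fin k) ⟨0, hk⟩ 1) X)
    (A : Matrix (Fin n) (Fin n) ℂ) :
    Uᴴ * (A ⊗ₖ (1 : Matrix (Fin k) (Fin k) ℂ)) * U =
      (of fun a c => trace (A * channel U (single (⟨0, hk⟩ : Fin k) ⟨0, hk⟩ 1)
        (single c a 1))) ⊗ₖ (1 : Matrix (Fin k) (Fin k) ℂ) := by
  set β₀ : Matrix (Fin k) (Fin k) ℂ := single (⟨0, hk⟩ : Fin k) ⟨0, hk⟩ 1 with hβ₀
  ext ⟨a,b⟩ ⟨c,d⟩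
  rw [entry_eq_trace, std_kron_std]
  rw [show (A ⊗ₖ (1 : Matrix (Fin k) (Fin k) ℂ)) * U *
      (single c a 1 ⊗ₖ single d b 1) * Uᴴ
      = (A ⊗ₖ (1 : Matrix (Fin k) (Fin k) ℂ)) *
        (U * (single c a 1 ⊗ₖ single d b 1) * Uᴴ) by
    simp only [Matrix.mul_assoc]]
  rw [trace_kron_one_mul]
  have hch : trB (U * (single c a 1 ⊗ₖ single d b 1) * Uᴴ)
      = channel U (single d b 1) (single c a 1) := rfl
  rw [hch, hmaster (single d b 1) (single c a 1), Matrix.mul_smul, trace_smul,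
    trace_std]
  simp only [kroneckerMap_apply, of_apply, one_apply, smul_eq_mul]
  by_cases hbd : b = d
  · subst hbd; simp [mul_comm]
  · simp [hbd, show ¬d = b from fun h => hbd h.symm]

lemma stdBasis_conjT {m : Type*} [Fintype m] [DecidableEq m] (i j : m) :
    (single i j (1:ℂ))ᴴ = single j i 1 := by
  ext x y
  simp only [conjTranspose_apply, single, of_apply, apply_ite (starRingEnd ℂ),
    _root_.map_one, _root_.map_zero, RCLike.star_def]
  by_cases h1 : i = y <;> by_cases h2 : j = x <;> simp [h1, h2, and_comm]

lemma isUnitary_mul {m : Type*} [Fintype m] [DecidableEq m] {A B : Matrix m m ℂ}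
    (hA : IsUnitary A) (hB : IsUnitary B) : IsUnitary (A * B) := by
  constructor
  · rw [conjTranspose_mul]
    calc A * B * (Bᴴ * Aᴴ) = A * (B * Bᴴ) * Aᴴ := by simp [Matrix.mul_assoc]
      _ = 1 := by rw [hB.1, Matrix.mul_one, hA.1]
  · rw [conjTranspose_mul]
    calc Bᴴ * Aᴴ * (A * B) = Bᴴ * (Aᴴ * A) * B := by simp [Matrix.mul_assoc]
      _ = 1 := by rw [hA.2, Matrix.mul_one, hB.2]

lemma isUnitary_conjT {m : Type*} [Fintype m] [DecidableEq m] {A : Matrix m m ℂ}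
    (hA : IsUnitary A) : IsUnitary Aᴴ :=
  ⟨by rw [conjTranspose_conjTranspose]; exact hA.2,
   by rw [conjTranspose_conjTranspose]; exact hA.1⟩

lemma isUnitary_kron {n k : ℕ} {V : Matrix (Fin n) (Fin n) ℂ} {W : Matrix (Fin k) (Fin k) ℂ}
    (hV : IsUnitary V) (hW : IsUnitary W) : IsUnitary (V ⊗ₖ W) := by
  constructor
  · rw [kron_conjT, ← mul_kronecker_mul, hV.1, hW.1, one_kronecker_one]
  · rw [kron_conjT, ← mul_kronecker_mul, hV.2, hW.2, one_kronecker_one]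

lemma star_mulVec_dot {m : Type*} [Fintype m] (M N : Matrix m m ℂ) (v w : m → ℂ) :
    star (M *ᵥ v) ⬝ᵥ (N *ᵥ w) = star v ⬝ᵥ ((Mᴴ * N) *ᵥ w) := by
  rw [star_mulVec, ← Matrix.dotProduct_mulVec, mulVec_mulVec]

/-- Skolem–Noether for star-homomorphisms of matrix algebras. -/
lemma skolem {n : ℕ} (hn : 0 < n) (L : Matrix (Fin n) (Fin n) ℂ →ₗ[ℂ] Matrix (Fin n) (Fin n) ℂ)
    (hmul : ∀ A B, L (A * B) = L A * L B)
    (hstar : ∀ A, L Aᴴ = (L A)ᴴ)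
    (hnz : L (single (⟨0, hn⟩ : Fin n) ⟨0, hn⟩ 1) ≠ 0) :
    ∃ V : Matrix (Fin n) (Fin n) ℂ, IsUnitary V ∧ ∀ A, L A = V * A * Vᴴ := by
  set i0 : Fin n := ⟨0, hn⟩ with hi0
  set p : Matrix (Fin n) (Fin n) ℂ := L (single i0 i0 1) with hp
  have hp2 : p * p = p := by
    rw [hp, ← hmul, single_mul_single_same, one_mul]
  have hE : ∃ x y, p x y ≠ 0 := by
    by_contra hcon
    push_neg at hcon
    exact hnz (by ext x y; simpa using hcon x y)
  obtain ⟨x₀, y₀, hxy⟩ := hE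
  set w₀ : Fin n → ℂ := fun z => p z y₀ with hw₀def
  have hw₀fix : p *ᵥ w₀ = w₀ := by
    ext z
    have := congrFun (congrFun hp2 z) y₀
    simpa [mulVec, dotProduct, mul_apply] using this
  set ν : ℝ := ∑ i, Complex.normSq (w₀ i) with hν
  have hνpos : 0 < ν := by
    rw [hν]
    apply Finset.sum_pos' (fun i _ => Complex.normSq_nonneg _)
    exact ⟨x₀, Finset.mem_univ _, by simpa [hw₀def] using Complex.normSq_pos.mpr hxy⟩
  have hdot₀ : star w₀ ⬝ᵥ w₀ = (ν : ℂ) := by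
    rw [hν]
    push_cast
    simp [dotProduct, Complex.normSq_eq_conj_mul_self]
  set w : Fin n → ℂ := ((Real.sqrt ν)⁻¹ : ℂ) • w₀ with hwdef
  have hwfix : p *ᵥ w = w := by
    rw [hwdef, mulVec_smul, hw₀fix]
  have hwnorm : star w ⬝ᵥ w = 1 := by
    rw [hwdef, star_smul, smul_dotProduct, dotProduct_smul, hdot₀]
    simp only [smul_eq_mul, star_trivial, RCLike.star_def, Complex.conj_ofReal,
      ← Complex.ofReal_inv, ← Complex.ofReal_mul]
    rw [show ((Real.sqrt ν)⁻¹ * ((Real.sqrt ν)⁻¹ * ν)) = 1 by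
      rw [← mul_assoc, ← mul_inv, Real.mul_self_sqrt hνpos.le]
      field_simp]
    norm_num
  -- the unitary
  set V : Matrix (Fin n) (Fin n) ℂ :=
    of (fun x i => (L (single i i0 1) *ᵥ w) x) with hV
  have hcol : ∀ i j : Fin n, (Vᴴ * V) i j = if i = j then 1 else 0 := by
    intro i j
    have h1 : (Vᴴ * V) i j
        = star (L (single i i0 1) *ᵥ w) ⬝ᵥ (L (single j i0 1) *ᵥ w) := by
      simp [hV, mul_apply, conjTranspose_apply, dotProduct, of_apply]
    rw [h1, star_mulVec_dot, ← hstar, stdBasis_conjT, ← hmul]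
    by_cases hij : i = j
    · subst hij
      rw [single_mul_single_same, one_mul, ← hp, hwfix, hwnorm, if_pos rfl]
    · have hz : single i0 i (1:ℂ) * single j i0 1 = 0 :=
        single_mul_single_of_ne (c := 1) i0 i j hij 1
      rw [hz, map_zero, Matrix.zero_mulVec, dotProduct_zero, if_neg hij]
  have hVHV : Vᴴ * V = 1 := by
    ext i j
    rw [hcol i j, one_apply]
  have hVunit : IsUnitary V := ⟨mul_eq_one_comm.mpr hVHV, hVHV⟩
  refine ⟨V, hVunit, fun A => ?_⟩
  have hinter : L A * V = V * A := by
    ext x j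
    have hcolj : ∀ y, V y j = (L (single j i0 1) *ᵥ w) y := fun y => rfl
    have h1 : (L A * V) x j = ((L A * L (single j i0 1)) *ᵥ w) x := by
      simp only [mul_apply, hcolj, mulVec, dotProduct, Finset.sum_mul, Finset.mul_sum]
      rw [Finset.sum_comm]
      exact Finset.sum_congr rfl fun y _ => Finset.sum_congr rfl fun t _ => by ring
    rw [h1, ← hmul]
    have hAE : A * single j i0 1 = ∑ i, A i j • single i i0 1 := by
      ext u v
      simp only [Matrix.sum_apply, Matrix.smul_apply, mul_apply, single, of_apply,
        smul_eq_mul, mul_ite, ite_mul, mul_one, mul_zero, one_mul, zero_mul, ite_and,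
        Finset.sum_ite_irrel, Finset.sum_ite_eq, Finset.sum_ite_eq', Finset.mem_univ, if_true,
        Finset.sum_const_zero]
    rw [hAE, map_sum]
    have h2 : (∑ i, L (A i j • single i i0 1)) *ᵥ w
        = ∑ i, A i j • (L (single i i0 1) *ᵥ w) := by
      ext z
      simp only [mulVec, dotProduct, Matrix.sum_apply, Finset.sum_apply, _root_.map_smul,
        Matrix.smul_apply, Pi.smul_apply, smul_eq_mul, Finset.sum_mul, Finset.mul_sum]
      rw [Finset.sum_comm]
      exact Finset.sum_congr rfl fun i _ => Finset.sum_congr rfl fun y _ => by ring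
    rw [h2]
    simp only [Finset.sum_apply, Pi.smul_apply, smul_eq_mul, mul_apply, hcolj]
    exact Finset.sum_congr rfl fun i _ => by rw [mul_comm]; rfl
  calc L A = L A * (V * Vᴴ) := by rw [hVunit.1, Matrix.mul_one]
    _ = (L A * V) * Vᴴ := by rw [Matrix.mul_assoc]
    _ = V * A * Vᴴ := by rw [hinter]

lemma commutant {n k : ℕ} (hn : 0 < n) (P : Matrix (Fin n × Fin k) (Fin n × Fin k) ℂ)
    (hcomm : ∀ A : Matrix (Fin n) (Fin n) ℂ,
      P * (A ⊗ₖ (1 : Matrix (Fin k) (Fin k) ℂ)) = (A ⊗ₖ 1) * P) :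
    P = (1 : Matrix (Fin n) (Fin n) ℂ) ⊗ₖ
      (of fun s t => P (⟨0, hn⟩, s) (⟨0, hn⟩, t)) := by
  set i0 : Fin n := ⟨0, hn⟩ with hi0
  ext ⟨j, s⟩ ⟨c, d⟩
  have h : (P * (single i0 j (1:ℂ) ⊗ₖ (1 : Matrix (Fin k) (Fin k) ℂ))) (i0, s) (c, d)
      = ((single i0 j (1:ℂ) ⊗ₖ (1 : Matrix (Fin k) (Fin k) ℂ)) * P) (i0, s) (c, d) := by
    rw [hcomm]
  have hL : (P * (single i0 j (1:ℂ) ⊗ₖ (1 : Matrix (Fin k) (Fin k) ℂ))) (i0, s) (c, d)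
      = (if j = c then 1 else 0) * P (i0, s) (i0, d) := by
    simp only [mul_apply, kroneckerMap_apply, single, of_apply, one_apply,
      Fintype.sum_prod_type, ite_and, mul_ite, ite_mul, mul_one, mul_zero, one_mul, zero_mul,
      Finset.sum_ite_irrel, Finset.sum_ite_eq, Finset.sum_ite_eq', Finset.mem_univ, if_true,
      Finset.sum_const_zero]
  have hR : ((single i0 j (1:ℂ) ⊗ₖ (1 : Matrix (Fin k) (Fin k) ℂ)) * P) (i0, s) (c, d)
      = P (j, s) (c, d) := by
    simp only [mul_apply, kroneckerMap_apply, single, of_apply, one_apply,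
      Fintype.sum_prod_type, ite_and, mul_ite, ite_mul, mul_one, mul_zero, one_mul, zero_mul,
      Finset.sum_ite_irrel, Finset.sum_ite_eq, Finset.sum_ite_eq', Finset.mem_univ, if_true,
      Finset.sum_const_zero]
  rw [hL, hR] at h
  rw [← h]
  simp only [kroneckerMap_apply, one_apply, of_apply]

lemma one_kron_inj {n k : ℕ} (hn : 0 < n) {X Y : Matrix (Fin k) (Fin k) ℂ}
    (h : (1 : Matrix (Fin n) (Fin n) ℂ) ⊗ₖ X = 1 ⊗ₖ Y) : X = Y := by
  ext s t
  have := congrFun (congrFun h (⟨0, hn⟩, s)) (⟨0, hn⟩, t)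
  simpa [kroneckerMap_apply, one_apply] using this

lemma isUnitary_one {m : Type*} [Fintype m] [DecidableEq m] :
    IsUnitary (1 : Matrix m m ℂ) :=
  ⟨by rw [conjTranspose_one, Matrix.mul_one], by rw [conjTranspose_one, Matrix.mul_one]⟩

lemma kron_one_mul_kron_one {n k : ℕ} (A B : Matrix (Fin n) (Fin n) ℂ) :
    (A ⊗ₖ (1 : Matrix (Fin k) (Fin k) ℂ)) * (B ⊗ₖ 1) = (A * B) ⊗ₖ 1 := by
  rw [← mul_kronecker_mul, Matrix.mul_one]

end Helpers

/-- a bipartite unitary induces the same channel for all ancilla states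
iff it is a tensor product of unitaries. -/
theorem stmt3 (n k : ℕ) (hn : 0 < n) (hk : 0 < k)
    (U : Matrix (Fin n × Fin k) (Fin n × Fin k) ℂ) (hU : IsUnitary U) :
    (∀ β γ : Matrix (Fin k) (Fin k) ℂ, IsDensity β → IsDensity γ →
      ∀ ρ : Matrix (Fin n) (Fin n) ℂ, IsDensity ρ → channel U β ρ = channel U γ ρ)
    ↔ ∃ (V : Matrix (Fin n) (Fin n) ℂ) (W : Matrix (Fin k) (Fin k) ℂ),
        IsUnitary V ∧ IsUnitary W ∧ U = V ⊗ₖ W := by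
  constructor
  · -- hard direction
    intro h
    set i0 : Fin n := ⟨0, hn⟩ with hi0
    have hmaster := master hk U h
    set β₀ : Matrix (Fin k) (Fin k) ℂ := single (⟨0, hk⟩ : Fin k) ⟨0, hk⟩ 1 with hβ₀
    set NL : Matrix (Fin n) (Fin n) ℂ →ₗ[ℂ] Matrix (Fin n) (Fin n) ℂ :=
      { toFun := fun A => of fun a c => trace (A * channel U β₀ (single c a 1)),
        map_add' := by
          intro A B; ext a c
          simp [Matrix.add_mul, trace_add]
        map_smul' := by
          intro r A; ext a c
          simp [Matrix.smul_mul, trace_smul] } with hNLdef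
    have hK : ∀ A, Uᴴ * (A ⊗ₖ (1 : Matrix (Fin k) (Fin k) ℂ)) * U = NL A ⊗ₖ 1 :=
      fun A => K_eq hk U hmaster A
    have hK' : ∀ A, U * (NL A ⊗ₖ (1 : Matrix (Fin k) (Fin k) ℂ)) * Uᴴ = A ⊗ₖ 1 := by
      intro A
      rw [← hK A]
      calc U * (Uᴴ * (A ⊗ₖ 1) * U) * Uᴴ
          = (U * Uᴴ) * ((A ⊗ₖ 1) * (U * Uᴴ)) := by simp [Matrix.mul_assoc]
        _ = A ⊗ₖ 1 := by rw [hU.1, Matrix.mul_one, Matrix.one_mul]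
    have hNmul : ∀ A B, NL (A * B) = NL A * NL B := by
      intro A B
      apply kron_one_inj hk
      have h1 : (NL A ⊗ₖ (1 : Matrix (Fin k) (Fin k) ℂ)) * (NL B ⊗ₖ 1)
          = (NL A * NL B) ⊗ₖ 1 := kron_one_mul_kron_one _ _
      rw [← hK (A * B), ← h1, ← hK A, ← hK B]
      calc Uᴴ * ((A * B) ⊗ₖ (1 : Matrix (Fin k) (Fin k) ℂ)) * U
          = Uᴴ * ((A ⊗ₖ 1) * (B ⊗ₖ 1)) * U := by
            rw [kron_one_mul_kron_one]
        _ = (Uᴴ * (A ⊗ₖ 1) * U) * (Uᴴ * (B ⊗ₖ 1) * U) := by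
            rw [show (Uᴴ * (A ⊗ₖ (1 : Matrix (Fin k) (Fin k) ℂ)) * U) *
                (Uᴴ * (B ⊗ₖ 1) * U)
                = Uᴴ * ((A ⊗ₖ 1) * ((U * Uᴴ) * ((B ⊗ₖ 1) * U))) by
              simp [Matrix.mul_assoc]]
            rw [hU.1, Matrix.one_mul]
            simp [Matrix.mul_assoc]
    have hNstar : ∀ A, NL Aᴴ = (NL A)ᴴ := by
      intro A
      apply kron_one_inj hk
      have h1 : (NL A)ᴴ ⊗ₖ (1 : Matrix (Fin k) (Fin k) ℂ) = (NL A ⊗ₖ 1)ᴴ := by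
        rw [kron_conjT, conjTranspose_one]
      rw [← hK Aᴴ, h1, ← hK A, conjTranspose_mul, conjTranspose_mul,
        conjTranspose_conjTranspose, kron_conjT, conjTranspose_one]
      simp [Matrix.mul_assoc]
    have hNnz : NL (single i0 i0 1) ≠ 0 := by
      intro h0
      have h1 := hK' (single i0 i0 1)
      rw [h0, Matrix.zero_kronecker, Matrix.mul_zero, Matrix.zero_mul] at h1
      have h2 := congrFun (congrFun h1 (i0, (⟨0, hk⟩ : Fin k))) (i0, (⟨0, hk⟩ : Fin k))
      simp [kroneckerMap_apply, single, one_apply] at h2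
    obtain ⟨V₀, hV₀u, hV₀⟩ := skolem hn NL hNmul hNstar hNnz
    set P : Matrix (Fin n × Fin k) (Fin n × Fin k) ℂ := U * (V₀ ⊗ₖ 1) with hPdef
    have hPu : IsUnitary P := isUnitary_mul hU (isUnitary_kron hV₀u isUnitary_one)
    have hPAP : ∀ A : Matrix (Fin n) (Fin n) ℂ,
        P * (A ⊗ₖ (1 : Matrix (Fin k) (Fin k) ℂ)) * Pᴴ = A ⊗ₖ 1 := by
      intro A
      have h1 := hK' A
      rw [hV₀ A] at h1
      have h2 : ((V₀ * A * V₀ᴴ) ⊗ₖ (1 : Matrix (Fin k) (Fin k) ℂ))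
          = (V₀ ⊗ₖ 1) * (A ⊗ₖ 1) * (V₀ᴴ ⊗ₖ 1) := by
        rw [kron_one_mul_kron_one, kron_one_mul_kron_one]
      rw [h2] at h1
      have hPH : Pᴴ = (V₀ᴴ ⊗ₖ (1 : Matrix (Fin k) (Fin k) ℂ)) * Uᴴ := by
        rw [hPdef, conjTranspose_mul, kron_conjT, conjTranspose_one]
      rw [hPdef, hPH]
      calc U * (V₀ ⊗ₖ (1 : Matrix (Fin k) (Fin k) ℂ)) * (A ⊗ₖ 1) *
            ((V₀ᴴ ⊗ₖ (1 : Matrix (Fin k) (Fin k) ℂ)) * Uᴴ)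
          = U * ((V₀ ⊗ₖ 1) * (A ⊗ₖ 1) * (V₀ᴴ ⊗ₖ 1)) * Uᴴ := by simp [Matrix.mul_assoc]
        _ = A ⊗ₖ 1 := h1
    have hPcomm : ∀ A : Matrix (Fin n) (Fin n) ℂ,
        P * (A ⊗ₖ (1 : Matrix (Fin k) (Fin k) ℂ)) = (A ⊗ₖ 1) * P := by
      intro A
      calc P * (A ⊗ₖ (1 : Matrix (Fin k) (Fin k) ℂ))
          = P * (A ⊗ₖ 1) * (Pᴴ * P) := by rw [hPu.2, Matrix.mul_one]
        _ = (P * (A ⊗ₖ 1) * Pᴴ) * P := by simp [Matrix.mul_assoc]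
        _ = (A ⊗ₖ 1) * P := by rw [hPAP A]
    set W : Matrix (Fin k) (Fin k) ℂ := of fun s t => P (i0, s) (i0, t) with hWdef
    have hPW : P = (1 : Matrix (Fin n) (Fin n) ℂ) ⊗ₖ W := commutant hn P hPcomm
    have hWu : IsUnitary W := by
      have h1 := hPu.1
      have h2 := hPu.2
      rw [hPW, kron_conjT, conjTranspose_one, ← mul_kronecker_mul, Matrix.one_mul] at h1 h2
      constructor
      · exact one_kron_inj hn (h1.trans one_kronecker_one.symm)
      · exact one_kron_inj hn (h2.trans one_kronecker_one.symm)
    refine ⟨V₀ᴴ, W, isUnitary_conjT hV₀u, hWu, ?_⟩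
    have hUeq : U = P * (V₀ᴴ ⊗ₖ (1 : Matrix (Fin k) (Fin k) ℂ)) := by
      rw [hPdef, Matrix.mul_assoc, kron_one_mul_kron_one, hV₀u.1,
        one_kronecker_one, Matrix.mul_one]
    rw [hUeq, hPW, ← mul_kronecker_mul, Matrix.one_mul, Matrix.mul_one]
  · -- easy direction
    rintro ⟨V, W, hV, hW, rfl⟩
    intro β γ hβ hγ ρ _
    rw [easy_dir V W hV hW β hβ.2 ρ, easy_dir V W hV hW γ hγ.2 ρ]


end BipartiteUnitary
end
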